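/- Let n, b, k be positive integers with 2 ≤ b and b^k ≤ n+1. Then there exist k permutations φ_1, …, φ_k of the set {0,1,…,n} such that for every pair of distinct elements x, y ∈ {0,1,…,n} there exists some i ∈ {1,…,k} with |φ_i(x) − φ_i(y)| > b^{k−1} − 2·b^{k−3}, where the right-hand side is computed in the reals (so b^{k−3} equals b^{−1} when k = 2 and b^{−2} when k = 1). -/

import Mathlib

namespace SpreadPerm

/-- number of `z < m` whose key `ψ (z % C)` equals `v` -/
def keyCnt (m C : ℕ) (ψ : ℕ → ℕ) (v : ℕ) : ℕ :=
  ((Finset.range m).filter fun z => ψ (z % C) = v).card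

/-- number of `z < m` whose key `ψ (z % C)` is `< c` -/
def keyLow (m C : ℕ) (ψ : ℕ → ℕ) (c : ℕ) : ℕ :=
  ((Finset.range m).filter fun z => ψ (z % C) < c).card

/-- the "sort by `(ψ (x % C), x)`" re-indexing map -/
def phi (m C : ℕ) (ψ : ℕ → ℕ) (x : ℕ) : ℕ :=
  keyLow m C ψ (ψ (x % C)) + x / C

lemma nat_dist_eq (a b : ℕ) : Nat.dist a b = a - b + (b - a) := rfl

variable {m C : ℕ} {ψ : ℕ → ℕ}

lemma keyLow_succ (c : ℕ) :
    keyLow m C ψ (c + 1) = keyLow m C ψ c + keyCnt m C ψ c := by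
  classical
  unfold keyLow keyCnt
  rw [← Finset.card_union_of_disjoint (by
    rw [Finset.disjoint_left]
    intro a ha hb
    simp only [Finset.mem_filter, Finset.mem_range] at ha hb
    omega)]
  congr 1
  ext z
  simp only [Finset.mem_union, Finset.mem_filter, Finset.mem_range]
  omega

lemma keyLow_mono {c c' : ℕ} (h : c ≤ c') : keyLow m C ψ c ≤ keyLow m C ψ c' := by
  apply Finset.card_le_card
  intro z hz
  simp only [Finset.mem_filter, Finset.mem_range] at *
  omega

lemma le_keyCnt (hC : 0 < C) {v l : ℕ} (hl : l < C) (hlv : ψ l = v) :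
    m / C ≤ keyCnt m C ψ v := by
  classical
  calc m / C = (Finset.range (m / C)).card := (Finset.card_range _).symm
  _ ≤ _ := by
      apply Finset.card_le_card_of_injOn (fun j => C * j + l)
      · intro j hj
        simp only [Finset.mem_coe, Finset.mem_range] at hj
        have h1 : C * (j + 1) ≤ C * (m / C) := mul_le_mul_right hj C
        have h2 : C * (m / C) ≤ m := by
          rw [Nat.mul_comm]; exact Nat.div_mul_le_self m C
        have h3 : C * (j + 1) = C * j + C := by ring
        simp only [keyCnt, Finset.mem_coe, Finset.mem_filter, Finset.mem_range]
        constructor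
        · omega
        · rw [Nat.mul_add_mod, Nat.mod_eq_of_lt hl, hlv]
      · intro a _ b _ h
        simp only at h
        exact Nat.eq_of_mul_eq_mul_left hC (by omega)

lemma div_lt_keyCnt (hC : 0 < C) {x : ℕ} (hx : x < m) :
    x / C < keyCnt m C ψ (ψ (x % C)) := by
  classical
  have h : (Finset.range (x / C + 1)).card ≤ keyCnt m C ψ (ψ (x % C)) := by
    apply Finset.card_le_card_of_injOn (fun j => C * j + x % C)
    · intro j hj
      simp only [Finset.mem_coe, Finset.mem_range] at hj
      have h1 : C * j ≤ C * (x / C) := mul_le_mul_right (by omega) C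
      have h2 : C * (x / C) + x % C = x := Nat.div_add_mod x C
      simp only [keyCnt, Finset.mem_coe, Finset.mem_filter, Finset.mem_range]
      constructor
      · omega
      · rw [Nat.mul_add_mod, Nat.mod_eq_of_lt (Nat.mod_lt x hC)]
    · intro a _ b _ h
      simp only at h
      exact Nat.eq_of_mul_eq_mul_left hC (by omega)
  simpa using h

lemma keyLow_add_mul_le (hC : 0 < C)
    (hsurj : ∀ v, v < C → ∃ l, l < C ∧ ψ l = v)
    (c : ℕ) : ∀ d : ℕ, c + d ≤ C →
    keyLow m C ψ c + d * (m / C) ≤ keyLow m C ψ (c + d) := by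
  intro d
  induction d with
  | zero => simp
  | succ e ih =>
    intro hce
    have h1 := ih (by omega)
    have h2 : keyLow m C ψ (c + e) + keyCnt m C ψ (c + e) = keyLow m C ψ (c + e + 1) :=
      (keyLow_succ _).symm
    obtain ⟨l, hl, hlv⟩ := hsurj (c + e) (by omega)
    have h3 : m / C ≤ keyCnt m C ψ (c + e) := le_keyCnt hC hl hlv
    have h4 : (e + 1) * (m / C) = e * (m / C) + m / C := by ring
    have h5 : c + (e + 1) = c + e + 1 := by omega
    rw [h5]
    omega

lemma keyLow_top (hC : 0 < C) (hmap : ∀ l, l < C → ψ l < C) :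
    keyLow m C ψ C = m := by
  unfold keyLow
  rw [Finset.filter_true_of_mem, Finset.card_range]
  intro z _
  exact hmap _ (Nat.mod_lt z hC)

lemma phi_lt (hC : 0 < C) (hmap : ∀ l, l < C → ψ l < C) {x : ℕ} (hx : x < m) :
    phi m C ψ x < m := by
  have h1 : phi m C ψ x < keyLow m C ψ (ψ (x % C) + 1) := by
    rw [keyLow_succ]
    exact Nat.add_lt_add_left (div_lt_keyCnt hC hx) _
  have h2 : keyLow m C ψ (ψ (x % C) + 1) ≤ keyLow m C ψ C :=
    keyLow_mono (hmap _ (Nat.mod_lt x hC))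
  rw [keyLow_top hC hmap] at h2
  omega

lemma phi_inj (hC : 0 < C) (hmap : ∀ l, l < C → ψ l < C)
    (hinj : ∀ l l', l < C → l' < C → ψ l = ψ l' → l = l')
    {x y : ℕ} (hx : x < m) (hy : y < m) (h : phi m C ψ x = phi m C ψ y) : x = y := by
  have key : ∀ a b : ℕ, a < m → b < m → ψ (a % C) < ψ (b % C) →
      phi m C ψ a < phi m C ψ b := by
    intro a b ha hb hab
    have h1 : phi m C ψ a < keyLow m C ψ (ψ (a % C) + 1) := by
      rw [keyLow_succ]; exact Nat.add_lt_add_left (div_lt_keyCnt hC ha) _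
    have h2 : keyLow m C ψ (ψ (a % C) + 1) ≤ keyLow m C ψ (ψ (b % C)) :=
      keyLow_mono (by omega)
    have h3 : keyLow m C ψ (ψ (b % C)) ≤ phi m C ψ b := Nat.le_add_right _ _
    omega
  rcases lt_trichotomy (ψ (x % C)) (ψ (y % C)) with hv | hv | hv
  · exact absurd h (Nat.ne_of_lt (key x y hx hy hv))
  · have hmod : x % C = y % C := hinj _ _ (Nat.mod_lt x hC) (Nat.mod_lt y hC) hv
    have hdiv : x / C = y / C := by
      unfold phi at h
      rw [hmod] at h
      omega
    have hx' := Nat.div_add_mod x C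
    have hy' := Nat.div_add_mod y C
    rw [hdiv, hmod] at hx'
    omega
  · exact absurd h.symm (Nat.ne_of_lt (key y x hy hx hv))

lemma phi_le_phi (hC : 0 < C) (hmap : ∀ l, l < C → ψ l < C)
    (hsurj : ∀ v, v < C → ∃ l, l < C ∧ ψ l = v)
    {x y : ℕ} (hv : ψ (x % C) < ψ (y % C)) :
    phi m C ψ x + (ψ (y % C) - ψ (x % C)) * (m / C) + y / C ≤ phi m C ψ y + x / C := by
  have h1 := keyLow_add_mul_le (m := m) hC hsurj (ψ (x % C)) (ψ (y % C) - ψ (x % C))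
    (by have := hmap (y % C) (Nat.mod_lt y hC); omega)
  rw [Nat.add_sub_cancel' (Nat.le_of_lt hv)] at h1
  unfold phi
  omega

noncomputable def permOf (m C : ℕ) (ψ : ℕ → ℕ) (hC : 0 < C)
    (hmap : ∀ l, l < C → ψ l < C)
    (hinj : ∀ l l', l < C → l' < C → ψ l = ψ l' → l = l') :
    Equiv.Perm (Fin m) :=
  Equiv.ofBijective (fun x => ⟨phi m C ψ x, phi_lt hC hmap x.isLt⟩)
    (Finite.injective_iff_bijective.mp (by
      intro a b hab
      exact Fin.ext (phi_inj hC hmap hinj a.isLt b.isLt (congrArg Fin.val hab))))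

lemma permOf_val (m C : ℕ) (ψ : ℕ → ℕ) (hC : 0 < C)
    (hmap : ∀ l, l < C → ψ l < C)
    (hinj : ∀ l l', l < C → l' < C → ψ l = ψ l' → l = l') (x : Fin m) :
    (permOf m C ψ hC hmap hinj x : ℕ) = phi m C ψ (x : ℕ) := rfl


/-- `k` permutations of `Fin m` such that every pair of distinct points is at
distance at least `s` in some permutation. -/
def Good (m k s : ℕ) : Prop :=
  ∃ φ : Fin k → Equiv.Perm (Fin m),
    ∀ x y : Fin m, x ≠ y → ∃ i, s ≤ Nat.dist (φ i x : ℕ) (φ i y : ℕ)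

lemma good_of_lt {m k s : ℕ} (φ : Fin k → Equiv.Perm (Fin m))
    (h : ∀ x y : Fin m, (x : ℕ) < (y : ℕ) →
      ∃ i, s ≤ Nat.dist (φ i x : ℕ) (φ i y : ℕ)) :
    Good m k s := by
  refine ⟨φ, fun x y hxy => ?_⟩
  have hne : (x : ℕ) ≠ (y : ℕ) := fun hv => hxy (Fin.ext hv)
  rcases lt_or_gt_of_ne hne with hlt | hgt
  · exact h x y hlt
  · obtain ⟨i, hi⟩ := h y x hgt
    exact ⟨i, by rwa [Nat.dist_comm] at hi⟩

lemma good_two {b m : ℕ} (hb : 2 ≤ b) (hm : b * b ≤ m) : Good m 2 b := by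
  have hb0 : 0 < b := by omega
  set ψ : ℕ → ℕ := fun l => b - 1 - l with hψ
  have hmap : ∀ l, l < b → ψ l < b := by intro l hl; simp only [hψ]; omega
  have hinj : ∀ l l', l < b → l' < b → ψ l = ψ l' → l = l' := by
    intro l l' hl hl' h; simp only [hψ] at h; omega
  have hsurj : ∀ v, v < b → ∃ l, l < b ∧ ψ l = v := by
    intro v hv; exact ⟨b - 1 - v, by omega, by simp only [hψ]; omega⟩
  have hL : b ≤ m / b := (Nat.le_div_iff_mul_le hb0).mpr hm
  apply good_of_lt ![1, permOf m b ψ hb0 hmap hinj]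
  intro x y hxy
  by_cases hid : b ≤ (y : ℕ) - (x : ℕ)
  · refine ⟨0, ?_⟩
    simp only [Matrix.cons_val_zero, Equiv.Perm.coe_one, id_eq, nat_dist_eq]
    omega
  · refine ⟨1, ?_⟩
    simp only [Matrix.cons_val_one, Matrix.cons_val_zero, Matrix.head_cons, permOf_val, nat_dist_eq]
    have hxm : (x : ℕ) < m := x.isLt
    have hym : (y : ℕ) < m := y.isLt
    have hdivle : (x : ℕ) / b ≤ (y : ℕ) / b := Nat.div_le_div_right (le_of_lt hxy)
    have hxdm := Nat.div_add_mod (x : ℕ) b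
    have hydm := Nat.div_add_mod (y : ℕ) b
    have hxmod : (x : ℕ) % b < b := Nat.mod_lt _ hb0
    have hymod : (y : ℕ) % b < b := Nat.mod_lt _ hb0
    have hlne : (x : ℕ) % b ≠ (y : ℕ) % b := by
      intro hcon
      rcases Nat.eq_or_lt_of_le hdivle with hq | hq
      · rw [hq, hcon] at hxdm; omega
      · have h5 : b * ((x : ℕ) / b + 1) ≤ b * ((y : ℕ) / b) := mul_le_mul_right hq b
        have hexp : b * ((x : ℕ) / b + 1) = b * ((x : ℕ) / b) + b := by ring
        omega
    rcases Nat.lt_or_ge ((x : ℕ) % b) ((y : ℕ) % b) with hll | hll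
    · -- x % b < y % b, the reversing key ψ flips the order
      have hvy : ψ ((y : ℕ) % b) < ψ ((x : ℕ) % b) := by simp only [hψ]; omega
      have h8 := phi_le_phi (m := m) hb0 hmap hsurj hvy
      have hDL : m / b ≤ (ψ ((x : ℕ) % b) - ψ ((y : ℕ) % b)) * (m / b) :=
        Nat.le_mul_of_pos_left _ (by omega)
      have hqeq : (x : ℕ) / b = (y : ℕ) / b := by
        rcases Nat.eq_or_lt_of_le hdivle with hq | hq
        · exact hq
        · exfalso
          have h5 : b * ((x : ℕ) / b + 1) ≤ b * ((y : ℕ) / b) := mul_le_mul_right hq b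
          have hexp : b * ((x : ℕ) / b + 1) = b * ((x : ℕ) / b) + b := by ring
          omega
      omega
    · have hll' : (y : ℕ) % b < (x : ℕ) % b := by omega
      have hvy : ψ ((x : ℕ) % b) < ψ ((y : ℕ) % b) := by simp only [hψ]; omega
      have h8 := phi_le_phi (m := m) hb0 hmap hsurj hvy
      have hDL : m / b ≤ (ψ ((y : ℕ) % b) - ψ ((x : ℕ) % b)) * (m / b) :=
        Nat.le_mul_of_pos_left _ (by omega)
      omega

lemma good_step {b C m k s : ℕ} (hb : 2 ≤ b) (hC : 0 < C) (hm : b * C ≤ m)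
    (hsC : b * s - 1 ≤ C) (hgood : Good C k s) :
    Good m (k + 1) (b * s - 1) := by
  obtain ⟨π, hπ⟩ := hgood
  have hL : b ≤ m / C := (Nat.le_div_iff_mul_le hC).mpr hm
  set ψ : Fin k → ℕ → ℕ := fun i l => if h : l < C then (π i ⟨l, h⟩ : ℕ) else 0 with hψ
  have hmap : ∀ i : Fin k, ∀ l, l < C → ψ i l < C := by
    intro i l hl
    simp only [hψ, dif_pos hl]
    exact (π i ⟨l, hl⟩).isLt
  have hinj : ∀ i : Fin k, ∀ l l', l < C → l' < C → ψ i l = ψ i l' → l = l' := by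
    intro i l l' hl hl' h
    simp only [hψ, dif_pos hl, dif_pos hl'] at h
    exact congrArg Fin.val ((π i).injective (Fin.ext h))
  have hsurj : ∀ i : Fin k, ∀ v, v < C → ∃ l, l < C ∧ ψ i l = v := by
    intro i v hv
    refine ⟨((π i).symm ⟨v, hv⟩ : Fin C), ((π i).symm ⟨v, hv⟩).isLt, ?_⟩
    simp only [hψ, dif_pos ((π i).symm ⟨v, hv⟩).isLt, Fin.eta, Equiv.apply_symm_apply]
  apply good_of_lt (Fin.snoc (fun i : Fin k => permOf m C (ψ i) hC (hmap i) (hinj i)) 1)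
  intro x y hxy
  by_cases hid : b * s - 1 ≤ (y : ℕ) - (x : ℕ)
  · refine ⟨Fin.last k, ?_⟩
    simp only [Fin.snoc_last, Equiv.Perm.coe_one, id_eq, nat_dist_eq]
    omega
  · have hxm : (x : ℕ) < m := x.isLt
    have hym : (y : ℕ) < m := y.isLt
    have hyx : (y : ℕ) - (x : ℕ) < C := by omega
    have hdivle : (x : ℕ) / C ≤ (y : ℕ) / C := Nat.div_le_div_right (le_of_lt hxy)
    have hxdm := Nat.div_add_mod (x : ℕ) C
    have hydm := Nat.div_add_mod (y : ℕ) C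
    have hxmod : (x : ℕ) % C < C := Nat.mod_lt _ hC
    have hymod : (y : ℕ) % C < C := Nat.mod_lt _ hC
    have hdiv1 : (y : ℕ) / C ≤ (x : ℕ) / C + 1 := by
      have h1 : (y : ℕ) ≤ (x : ℕ) + C := by omega
      have h2 : (y : ℕ) / C ≤ ((x : ℕ) + C) / C := Nat.div_le_div_right h1
      rwa [Nat.add_div_right _ hC] at h2
    have hlne : (x : ℕ) % C ≠ (y : ℕ) % C := by
      intro hcon
      rcases Nat.eq_or_lt_of_le hdivle with hq | hq
      · rw [hq, hcon] at hxdm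
        have : (x : ℕ) = (y : ℕ) := by omega
        omega
      · have h5 : C * ((x : ℕ) / C + 1) ≤ C * ((y : ℕ) / C) := mul_le_mul_right hq C
        have hexp : C * ((x : ℕ) / C + 1) = C * ((x : ℕ) / C) + C := by ring
        omega
    obtain ⟨i, hi⟩ := hπ ⟨(x : ℕ) % C, hxmod⟩ ⟨(y : ℕ) % C, hymod⟩
      (fun hcon => hlne (congrArg Fin.val hcon))
    rw [nat_dist_eq] at hi
    have hvx : ψ i ((x : ℕ) % C) = ((π i) ⟨(x : ℕ) % C, hxmod⟩ : ℕ) := by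
      simp only [hψ, dif_pos hxmod]
    have hvy : ψ i ((y : ℕ) % C) = ((π i) ⟨(y : ℕ) % C, hymod⟩ : ℕ) := by
      simp only [hψ, dif_pos hymod]
    rw [← hvx, ← hvy] at hi
    have hvne : ψ i ((x : ℕ) % C) ≠ ψ i ((y : ℕ) % C) :=
      fun hcon => hlne (hinj i _ _ hxmod hymod hcon)
    refine ⟨Fin.castSucc i, ?_⟩
    simp only [Fin.snoc_castSucc, permOf_val, nat_dist_eq]
    have hbs : b * s = s * b := Nat.mul_comm b s
    rcases Nat.lt_or_ge (ψ i ((x : ℕ) % C)) (ψ i ((y : ℕ) % C)) with hvv | hvv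
    · have h8 := phi_le_phi (m := m) hC (hmap i) (hsurj i) hvv
      have hD : s ≤ ψ i ((y : ℕ) % C) - ψ i ((x : ℕ) % C) := by omega
      have hmul1 : s * b ≤ (ψ i ((y : ℕ) % C) - ψ i ((x : ℕ) % C)) * (m / C) :=
        Nat.mul_le_mul hD hL
      omega
    · have hvv' : ψ i ((y : ℕ) % C) < ψ i ((x : ℕ) % C) := by omega
      have h8 := phi_le_phi (m := m) hC (hmap i) (hsurj i) hvv'
      have hD : s ≤ ψ i ((x : ℕ) % C) - ψ i ((y : ℕ) % C) := by omega
      have hmul1 : s * b ≤ (ψ i ((x : ℕ) % C) - ψ i ((y : ℕ) % C)) * (m / C) :=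
        Nat.mul_le_mul hD hL
      omega


/-- the separation guaranteed by `k` permutations -/
def sk (b : ℕ) : ℕ → ℕ
  | 0 => 1
  | 1 => 1
  | 2 => b
  | (k + 3) => b * sk b (k + 2) - 1

lemma sk_le {b : ℕ} (hb : 2 ≤ b) : ∀ k, 2 ≤ k → sk b k ≤ b ^ (k - 1) := by
  intro k hk
  induction k, hk using Nat.le_induction with
  | base => simpa [sk] using le_rfl
  | succ n hn ih =>
    obtain ⟨j, rfl⟩ : ∃ j, n = j + 2 := ⟨n - 2, by omega⟩
    have h1 : b * sk b (j + 2) ≤ b * b ^ (j + 1) := mul_le_mul_right (by simpa using ih) b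
    have h2 : b * b ^ (j + 1) = b ^ (j + 2) := (pow_succ' b (j + 1)).symm
    show b * sk b (j + 2) - 1 ≤ b ^ (j + 3 - 1)
    have h3 : j + 3 - 1 = j + 2 := by omega
    rw [h3]
    omega

lemma good_all {b : ℕ} (hb : 2 ≤ b) : ∀ k, 2 ≤ k → ∀ m, b ^ k ≤ m → Good m k (sk b k) := by
  intro k hk
  induction k, hk using Nat.le_induction with
  | base =>
    intro m hm
    have h2 : b * b ≤ m := by
      have : b ^ 2 = b * b := by ring
      omega
    exact good_two hb h2
  | succ n hn ih =>
    intro m hm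
    obtain ⟨j, rfl⟩ : ∃ j, n = j + 2 := ⟨n - 2, by omega⟩
    have hC : 0 < b ^ (j + 2) := pow_pos (by omega) _
    have hmm : b * b ^ (j + 2) ≤ m := by
      have h0 : b * b ^ (j + 2) = b ^ (j + 2 + 1) := (pow_succ' b (j + 2)).symm
      omega
    have hsC : b * sk b (j + 2) - 1 ≤ b ^ (j + 2) := by
      have h1 : b * sk b (j + 2) ≤ b * b ^ (j + 1) :=
        mul_le_mul_right (by simpa using sk_le hb (j + 2) (by omega)) b
      have h2 : b * b ^ (j + 1) = b ^ (j + 2) := (pow_succ' b (j + 1)).symm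
      omega
    exact good_step hb hC hmm hsC (ih (b ^ (j + 2)) le_rfl)

lemma sk_big {b : ℕ} (hb : 2 ≤ b) :
    ∀ k, 3 ≤ k → b ^ (k - 1) + 1 ≤ sk b k + 2 * b ^ (k - 3) := by
  intro k hk
  induction k, hk using Nat.le_induction with
  | base =>
    show b ^ 2 + 1 ≤ b * sk b 2 - 1 + 2 * b ^ 0
    have h1 : b ^ 2 = b * b := by ring
    have h2 : sk b 2 = b := rfl
    have h3 : 4 ≤ b * b := by nlinarith
    simp only [h2, pow_zero]
    omega
  | succ n hn ih =>
    obtain ⟨j, rfl⟩ : ∃ j, n = j + 3 := ⟨n - 3, by omega⟩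
    have ih' : b ^ (j + 2) + 1 ≤ sk b (j + 3) + 2 * b ^ j := by simpa using ih
    have h1 : b * (b ^ (j + 2) + 1) ≤ b * (sk b (j + 3) + 2 * b ^ j) :=
      mul_le_mul_right ih' b
    have e1 : b * (b ^ (j + 2) + 1) = b ^ (j + 3) + b := by ring
    have e2 : b * (sk b (j + 3) + 2 * b ^ j) = b * sk b (j + 3) + 2 * b ^ (j + 1) := by ring
    rw [e1, e2] at h1
    show b ^ (j + 4 - 1) + 1 ≤ b * sk b (j + 3) - 1 + 2 * b ^ (j + 4 - 3)
    have h3 : j + 4 - 1 = j + 3 := by omega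
    have h4 : j + 4 - 3 = j + 1 := by omega
    rw [h3, h4]
    omega

lemma dist_cast_real (a c : ℕ) : ((Nat.dist a c : ℕ) : ℝ) = |(a : ℝ) - (c : ℝ)| := by
  rcases le_total a c with h | h
  · rw [Nat.dist_eq_sub_of_le h, abs_sub_comm,
      abs_of_nonneg (sub_nonneg.mpr (by exact_mod_cast h))]
    push_cast [h]
    ring
  · rw [Nat.dist_eq_sub_of_le_right h,
      abs_of_nonneg (sub_nonneg.mpr (by exact_mod_cast h))]
    push_cast [h]
    ring

end SpreadPerm

/-- for positive integers `n, b, k` with `2 ≤ b` and `b^k ≤ n+1`,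
there are `k` permutations `φ_1, …, φ_k` of `{0,1,…,n}` such that any two
distinct `x, y` satisfy `|φ_i(x) − φ_i(y)| > b^(k−1) − 2·b^(k−3)` for some `i`,
the right-hand side being computed in the reals. -/
theorem exists_spreading_perms (n b k : ℕ) (hn : 1 ≤ n) (hk : 1 ≤ k)
    (hb : 2 ≤ b) (hbk : b ^ k ≤ n + 1) :
    ∃ φ : Fin k → Equiv.Perm (Fin (n + 1)),
      ∀ x y : Fin (n + 1), x ≠ y → ∃ i : Fin k,
        (b : ℝ) ^ ((k : ℤ) - 1) - 2 * (b : ℝ) ^ ((k : ℤ) - 3) <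
          |(((φ i x : ℕ) : ℝ)) - (((φ i y : ℕ) : ℝ))| := by
  have hb0 : (0 : ℝ) < (b : ℝ) := by positivity
  rcases Nat.lt_or_ge k 3 with hk3 | hk3
  · interval_cases k
    · -- k = 1 : the identity works since the bound is < 1
      refine ⟨fun _ => 1, fun x y hxy => ⟨0, ?_⟩⟩
      have hne : (x : ℕ) ≠ (y : ℕ) := fun hv => hxy (Fin.ext hv)
      have h1 : (1 : ℝ) ≤ |((x : ℕ) : ℝ) - ((y : ℕ) : ℝ)| := by
        rw [← SpreadPerm.dist_cast_real]
        have : 1 ≤ Nat.dist (x : ℕ) (y : ℕ) := by rw [SpreadPerm.nat_dist_eq]; omega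
        exact_mod_cast this
      have h2 : ((1 : ℕ) : ℤ) - 1 = 0 := by norm_num
      have h3 : ((1 : ℕ) : ℤ) - 3 = -2 := by norm_num
      rw [h2, h3, zpow_zero]
      have h4 : (0 : ℝ) < 2 * (b : ℝ) ^ (-2 : ℤ) := by positivity
      simp only [Equiv.Perm.coe_one, id_eq]
      linarith
    · -- k = 2
      have hbb : b * b ≤ n + 1 := by
        have h : b ^ 2 = b * b := by ring
        omega
      obtain ⟨φ, hφ⟩ := SpreadPerm.good_two (m := n + 1) hb hbb
      refine ⟨φ, fun x y hxy => ?_⟩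
      obtain ⟨i, hi⟩ := hφ x y hxy
      refine ⟨i, ?_⟩
      rw [← SpreadPerm.dist_cast_real]
      have h2 : ((2 : ℕ) : ℤ) - 1 = 1 := by norm_num
      have h3 : ((2 : ℕ) : ℤ) - 3 = -1 := by norm_num
      rw [h2, h3, zpow_one]
      have h4 : (0 : ℝ) < 2 * (b : ℝ) ^ (-1 : ℤ) := by positivity
      have h5 : (b : ℝ) ≤ (Nat.dist (φ i x : ℕ) (φ i y : ℕ) : ℝ) := by exact_mod_cast hi
      linarith
  · -- k ≥ 3
    obtain ⟨φ, hφ⟩ := SpreadPerm.good_all hb k (by omega) (n + 1) hbk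
    refine ⟨φ, fun x y hxy => ?_⟩
    obtain ⟨i, hi⟩ := hφ x y hxy
    refine ⟨i, ?_⟩
    rw [← SpreadPerm.dist_cast_real]
    have hz1 : (k : ℤ) - 1 = ((k - 1 : ℕ) : ℤ) := by omega
    have hz3 : (k : ℤ) - 3 = ((k - 3 : ℕ) : ℤ) := by omega
    rw [hz1, hz3, zpow_natCast, zpow_natCast]
    have hnat := SpreadPerm.sk_big hb k hk3
    have h1 : ((b ^ (k - 1) : ℕ) : ℝ) + 1 ≤ (SpreadPerm.sk b k : ℝ) + 2 * ((b ^ (k - 3) : ℕ) : ℝ) := by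
      exact_mod_cast hnat
    have h2 : (SpreadPerm.sk b k : ℝ) ≤ (Nat.dist (φ i x : ℕ) (φ i y : ℕ) : ℝ) := by exact_mod_cast hi
    have h3 : ((b ^ (k - 1) : ℕ) : ℝ) = (b : ℝ) ^ (k - 1) := by push_cast; ring
    have h4 : ((b ^ (k - 3) : ℕ) : ℝ) = (b : ℝ) ^ (k - 3) := by push_cast; ring
    linarith
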